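/- arXiv:2204.12358 — 5 statements merged into one kernel-verified Lean document; each statement's English description precedes it below -/
import Mathlib

section
/- Let p ∈ [1,∞), z ≥ 1, let C be a nonempty finite index set, let x_i ∈ ℝ^d for i ∈ C, and let c ∈ ℝ^d. Then Σ_{t∈C} Σ_{i∈C} ‖x_i − x_t‖_p^z ≤ 2^z · |C| · Σ_{i∈C} ‖x_i − c‖_p^z. Equivalently, the expected cost of clustering the points of C around a uniformly random data point of C is at most 2^z times the cost of clustering them around the center c. -/
open Finset Real

lemma aux_rpow_add {a b z : ℝ} (ha : 0 ≤ a) (hb : 0 ≤ b) (hz : 1 ≤ z) :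
    (a + b) ^ z ≤ 2 ^ (z - 1) * (a ^ z + b ^ z) := by
  have := NNReal.coe_le_coe.2
    (NNReal.rpow_add_le_mul_rpow_add_rpow ⟨a, ha⟩ ⟨b, hb⟩ hz)
  push_cast at this
  exact this

/-- The expected cost of clustering the points of `C` around a uniformly random data point
of `C` is at most `2^z` times the cost of clustering them around the center `c`. -/
theorem stmt_1 {ι : Type*} (d : ℕ) (C : Finset ι) (hC : C.Nonempty)
    (p z : ℝ) (hp : 1 ≤ p) (hz : 1 ≤ z)
    (x : ι → Fin d → ℝ) (c : Fin d → ℝ) :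
    ∑ t ∈ C, ∑ i ∈ C, ((∑ j : Fin d, |x i j - x t j| ^ p) ^ (1 / p)) ^ z
      ≤ (2 : ℝ) ^ z * C.card *
        ∑ i ∈ C, ((∑ j : Fin d, |x i j - c j| ^ p) ^ (1 / p)) ^ z := by
  set f : ι → ℝ := fun i => (∑ j : Fin d, |x i j - c j| ^ p) ^ (1 / p) with hf
  have hf0 : ∀ i, 0 ≤ f i := fun i =>
    Real.rpow_nonneg (Finset.sum_nonneg fun j _ =>
      Real.rpow_nonneg (abs_nonneg _) _) _
  have key : ∀ i t, ((∑ j : Fin d, |x i j - x t j| ^ p) ^ (1 / p)) ^ z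
      ≤ 2 ^ (z - 1) * (f i ^ z + f t ^ z) := by
    intro i t
    have tri : (∑ j : Fin d, |x i j - x t j| ^ p) ^ (1 / p) ≤ f i + f t := by
      have h := Real.Lp_add_le Finset.univ (fun j => x i j - c j)
        (fun j => c j - x t j) hp
      simp only [hf]
      calc (∑ j : Fin d, |x i j - x t j| ^ p) ^ (1 / p)
          = (∑ j : Fin d, |(x i j - c j) + (c j - x t j)| ^ p) ^ (1 / p) := by
            congr 1; apply Finset.sum_congr rfl; intro j _; ring_nf
        _ ≤ (∑ j : Fin d, |x i j - c j| ^ p) ^ (1 / p)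
            + (∑ j : Fin d, |c j - x t j| ^ p) ^ (1 / p) := h
        _ = (∑ j : Fin d, |x i j - c j| ^ p) ^ (1 / p)
            + (∑ j : Fin d, |x t j - c j| ^ p) ^ (1 / p) := by
            congr 2; apply Finset.sum_congr rfl; intro j _
            rw [abs_sub_comm]
    have h0 : (0:ℝ) ≤ (∑ j : Fin d, |x i j - x t j| ^ p) ^ (1 / p) :=
      Real.rpow_nonneg (Finset.sum_nonneg fun j _ =>
        Real.rpow_nonneg (abs_nonneg _) _) _
    calc ((∑ j : Fin d, |x i j - x t j| ^ p) ^ (1 / p)) ^ z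
        ≤ (f i + f t) ^ z := Real.rpow_le_rpow h0 tri (le_trans zero_le_one hz)
      _ ≤ 2 ^ (z - 1) * (f i ^ z + f t ^ z) := aux_rpow_add (hf0 i) (hf0 t) hz
  calc ∑ t ∈ C, ∑ i ∈ C, ((∑ j : Fin d, |x i j - x t j| ^ p) ^ (1 / p)) ^ z
      ≤ ∑ t ∈ C, ∑ i ∈ C, 2 ^ (z - 1) * (f i ^ z + f t ^ z) :=
        Finset.sum_le_sum fun t _ => Finset.sum_le_sum fun i _ => key i t
    _ = (2:ℝ) ^ z * C.card * ∑ i ∈ C, f i ^ z := by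
        have step : ∀ t, ∑ i ∈ C, 2 ^ (z - 1) * (f i ^ z + f t ^ z)
            = 2 ^ (z - 1) * (∑ i ∈ C, f i ^ z) + 2 ^ (z - 1) * C.card * f t ^ z := by
          intro t
          rw [← Finset.mul_sum, Finset.sum_add_distrib, Finset.sum_const, nsmul_eq_mul]
          ring
        rw [Finset.sum_congr rfl fun t _ => step t, Finset.sum_add_distrib,
          Finset.sum_const, nsmul_eq_mul, ← Finset.mul_sum]
        have h2 : (2:ℝ) ^ z = 2 ^ (z - 1) * 2 := by
          have h := Real.rpow_add (show (0:ℝ) < 2 by norm_num) (z - 1) 1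
          rw [sub_add_cancel, Real.rpow_one] at h
          exact h
        rw [h2]; ring
end

section
/- Let p ∈ [1,∞), let n ≥ 1, let λ_1,…,λ_n be weights, and let a_1,…,a_n ∈ ℝ satisfy Σ_{i=1}^n λ_i a_i = 0. Then Σ_{i=1}^n λ_i |a_i|^p ≤ Σ_{i=1}^n Σ_{i'=1}^n λ_i λ_{i'} |a_i − a_{i'}|^p. -/
open Finset Real

lemma absrpow_convex {p : ℝ} (hp : 1 ≤ p) :
    ConvexOn ℝ Set.univ (fun x : ℝ => |x| ^ p) := by
  have h : ConvexOn ℝ Set.univ ((fun x : ℝ => x ^ p) ∘ (fun x : ℝ => |x|)) := by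
    apply ConvexOn.comp
    · have himg : (fun x : ℝ => |x|) '' Set.univ = Set.Ici 0 := by
        ext x; constructor
        · rintro ⟨y, _, rfl⟩; exact abs_nonneg y
        · intro hx; exact ⟨x, Set.mem_univ x, abs_of_nonneg hx⟩
      rw [himg]; exact convexOn_rpow hp
    · exact convexOn_univ_norm (E := ℝ)
    · intro x hx y hy hxy
      rcases hx with ⟨x', _, rfl⟩; rcases hy with ⟨y', _, rfl⟩
      exact Real.rpow_le_rpow (abs_nonneg _) hxy (le_trans zero_le_one hp)
  exact h

/-- For centered weighted points on the line, the weighted `p`-th moment about zero is at most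
the average pairwise `p`-th power distance. -/
theorem stmt_3 (n : ℕ) (hn : 1 ≤ n) (p : ℝ) (hp : 1 ≤ p)
    (lam : Fin n → ℝ) (hlam : ∀ i, 0 ≤ lam i) (hsum : ∑ i, lam i = 1)
    (a : Fin n → ℝ) (hcenter : ∑ i, lam i * a i = 0) :
    ∑ i, lam i * |a i| ^ p ≤ ∑ i, ∑ i', lam i * lam i' * |a i - a i'| ^ p := by
  have key : ∀ i, |a i| ^ p ≤ ∑ i', lam i' * |a i - a i'| ^ p := by
    intro i
    have h1 : a i = ∑ i', lam i' * (a i - a i') := by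
      simp [mul_sub, Finset.sum_sub_distrib, hcenter, ← Finset.sum_mul, hsum]
    have := (absrpow_convex hp).map_sum_le (t := Finset.univ) (w := lam)
      (p := fun i' => a i - a i') (fun i _ => hlam i) (by simpa using hsum) (fun i _ => Set.mem_univ _)
    simpa [smul_eq_mul, ← h1] using this
  calc ∑ i, lam i * |a i| ^ p
      ≤ ∑ i, lam i * ∑ i', lam i' * |a i - a i'| ^ p := by
        apply Finset.sum_le_sum
        intro i _
        exact mul_le_mul_of_nonneg_left (key i) (hlam i)
    _ = ∑ i, ∑ i', lam i * lam i' * |a i - a i'| ^ p := by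
        simp [Finset.mul_sum, mul_assoc]
end

section
/- Let p ∈ [1,2], let ε ∈ (0,1/2], let λ_1,…,λ_n be weights, and let a_1,…,a_n ∈ ℝ satisfy Σ_{i=1}^n λ_i a_i = 0. Set A = (Σ_{i=1}^n λ_i |a_i|^p)^{1/p}, and let γ ∈ ℝ satisfy (1−ε)·A ≤ γ ≤ (1+ε)·A. Let t be an integer with t ≥ 16·2^p/ε, and define grid points y_ℓ = −4γ + 8γℓ/t for ℓ ∈ {0,1,…,t}. Then min_{0≤ℓ≤t} (Σ_{i=1}^n λ_i |a_i − y_ℓ|^p)^{1/p} ≤ (1 + ε/2) · inf_{z∈ℝ} (Σ_{i=1}^n λ_i |a_i − z|^p)^{1/p}. -/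
open Finset Real

set_option maxHeartbeats 2000000 in
/-- Grid search over `O(2^p/ε)` evenly spaced candidate centers in `[-4γ, 4γ]` achieves a
`(1 + ε/2)`-approximation to the optimal one-dimensional weighted `ℓ_p^p`-median cost. -/
theorem stmt_7 (n : ℕ) (hn : 1 ≤ n) (p : ℝ) (hp : 1 ≤ p) (hp2 : p ≤ 2)
    (eps : ℝ) (heps : 0 < eps) (heps2 : eps ≤ 1 / 2)
    (lam : Fin n → ℝ) (hlam : ∀ i, 0 ≤ lam i) (hsum : ∑ i, lam i = 1)
    (a : Fin n → ℝ) (hcenter : ∑ i, lam i * a i = 0)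
    (gamma : ℝ)
    (hgamma1 : (1 - eps) * (∑ i, lam i * |a i| ^ p) ^ (1 / p) ≤ gamma)
    (hgamma2 : gamma ≤ (1 + eps) * (∑ i, lam i * |a i| ^ p) ^ (1 / p))
    (t : ℕ) (ht : 16 * (2 : ℝ) ^ p / eps ≤ (t : ℝ))
    (y : ℕ → ℝ) (hy : ∀ ℓ, y ℓ = -4 * gamma + 8 * gamma * (ℓ : ℝ) / (t : ℝ)) :
    ((Finset.range (t + 1)).inf' (by simp) fun ℓ =>
        (∑ i, lam i * |a i - y ℓ| ^ p) ^ (1 / p))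
      ≤ (1 + eps / 2) * ⨅ z : ℝ, (∑ i, lam i * |a i - z| ^ p) ^ (1 / p) := by
  have hp0 : 0 < p := lt_of_lt_of_le one_pos hp
  set cost : ℝ → ℝ := fun z => (∑ i, lam i * |a i - z| ^ p) ^ (1 / p) with hcostdef
  set A : ℝ := (∑ i, lam i * |a i| ^ p) ^ (1 / p) with hAdef
  have hA0 : 0 ≤ A := Real.rpow_nonneg
    (Finset.sum_nonneg fun i _ => mul_nonneg (hlam i) (Real.rpow_nonneg (abs_nonneg _) _)) _
  have hcost_nonneg : ∀ z, 0 ≤ cost z := fun z => Real.rpow_nonneg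
    (Finset.sum_nonneg fun i _ => mul_nonneg (hlam i) (Real.rpow_nonneg (abs_nonneg _) _)) _
  have hcost0 : cost 0 = A := by simp [hcostdef, hAdef]
  -- power mean inequality
  have habs : ∀ z, ∑ i, lam i * |a i - z| ≤ cost z := by
    intro z
    exact Real.arith_mean_le_rpow_mean Finset.univ lam (fun i => |a i - z|)
      (fun i _ => hlam i) hsum (fun i _ => abs_nonneg _) hp
  have hzle : ∀ z, |z| ≤ cost z := by
    intro z
    have h1 : z = ∑ i, lam i * (z - a i) := by
      simp only [mul_sub, Finset.sum_sub_distrib, ← Finset.sum_mul, hsum, hcenter]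
      ring
    calc |z| = |∑ i, lam i * (z - a i)| := by rw [← h1]
      _ ≤ ∑ i, |lam i * (z - a i)| := Finset.abs_sum_le_sum_abs _ _
      _ = ∑ i, lam i * |a i - z| := by
          refine Finset.sum_congr rfl fun i _ => ?_
          rw [abs_mul, abs_of_nonneg (hlam i), abs_sub_comm]
      _ ≤ cost z := habs z
  -- Lipschitz property (Minkowski)
  have hlip : ∀ z w, cost z ≤ cost w + |w - z| := by
    intro z w
    have hlp : ∀ (i : Fin n) (x : ℝ), |lam i ^ (1/p) * x| ^ p = lam i * |x| ^ p := by
      intro i x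
      rw [abs_mul, abs_of_nonneg (Real.rpow_nonneg (hlam i) _),
        Real.mul_rpow (Real.rpow_nonneg (hlam i) _) (abs_nonneg x),
        ← Real.rpow_mul (hlam i), one_div_mul_cancel hp0.ne', Real.rpow_one]
    have key := Real.Lp_add_le Finset.univ (fun i => lam i ^ (1/p) * (a i - w))
      (fun i => lam i ^ (1/p) * (w - z)) hp
    have e1 : ∑ i, |lam i ^ (1/p) * (a i - w) + lam i ^ (1/p) * (w - z)| ^ p
        = ∑ i, lam i * |a i - z| ^ p := by
      refine Finset.sum_congr rfl fun i _ => ?_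
      rw [← mul_add]
      have : (a i - w) + (w - z) = a i - z := by ring
      rw [this, hlp]
    have e2 : ∑ i, |lam i ^ (1/p) * (a i - w)| ^ p = ∑ i, lam i * |a i - w| ^ p :=
      Finset.sum_congr rfl fun i _ => hlp i _
    have e3 : ∑ i, |lam i ^ (1/p) * (w - z)| ^ p = |w - z| ^ p := by
      simp_rw [hlp]
      rw [← Finset.sum_mul, hsum, one_mul]
    rw [e1, e2, e3] at key
    have e4 : (|w - z| ^ p) ^ (1/p) = |w - z| := by
      rw [← Real.rpow_mul (abs_nonneg _), mul_one_div_cancel hp0.ne', Real.rpow_one]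
    rw [e4] at key
    exact key
  have hA2 : ∀ z, A ≤ 2 * cost z := by
    intro z
    have h1 := hlip 0 z
    have h2 := hzle z
    rw [hcost0] at h1
    rw [sub_zero] at h1
    linarith
  clear_value cost A
  -- numerics
  have h2p : (2:ℝ) ≤ 2 ^ p := by
    calc (2:ℝ) = 2 ^ (1:ℝ) := (Real.rpow_one 2).symm
      _ ≤ 2 ^ p := Real.rpow_le_rpow_of_exponent_le one_le_two hp
  have ht32 : 32 / eps ≤ (t : ℝ) := by
    refine le_trans ?_ ht
    gcongr
    linarith
  have hteps : 32 ≤ eps * t := by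
    rw [div_le_iff₀ heps] at ht32
    linarith
  have ht64 : (64:ℝ) ≤ (t:ℝ) := by
    refine le_trans ?_ ht32
    rw [le_div_iff₀ heps]
    linarith
  have htpos : (0:ℝ) < (t:ℝ) := by linarith
  have hepsA : eps * A ≤ 1 / 2 * A := mul_le_mul_of_nonneg_right heps2 hA0
  have hγ0 : 0 ≤ gamma := by
    have := mul_nonneg (show (0:ℝ) ≤ 1 - eps by linarith) hA0
    linarith
  have hγlo : A / 2 ≤ gamma := by nlinarith [hepsA, hgamma1]
  have hγhi : gamma ≤ 3 / 2 * A := by nlinarith [hepsA, hgamma2]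
  -- grid step
  have hstep : ∀ w : ℝ, |w| ≤ 4 * gamma →
      ∃ ℓ ∈ Finset.range (t + 1), |w - y ℓ| ≤ 4 * gamma / t := by
    intro w hw
    rcases hγ0.eq_or_lt with hg | hg
    · refine ⟨0, by simp, ?_⟩
      have hw0 : w = 0 := by
        have := abs_nonneg w
        have : |w| = 0 := le_antisymm (by rw [← hg] at hw; simpa using hw) (abs_nonneg w)
        exact abs_eq_zero.mp this
      rw [hw0, hy 0, ← hg]
      simp
    · set r : ℝ := (w + 4 * gamma) * t / (8 * gamma) with hrdef
      have hwlo := (abs_le.mp hw).1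
      have hwhi := (abs_le.mp hw).2
      have h8g : (0:ℝ) < 8 * gamma := by linarith
      have hr0 : 0 ≤ r := div_nonneg (mul_nonneg (by linarith) htpos.le) h8g.le
      have hrt : r ≤ t := by
        rw [hrdef, div_le_iff₀ h8g]
        have := mul_le_mul_of_nonneg_right (show w + 4 * gamma ≤ 8 * gamma by linarith) htpos.le
        linarith
      have h1 : (⌊r + 1/2⌋₊ : ℝ) ≤ r + 1/2 := Nat.floor_le (by linarith)
      have h2 : r + 1/2 < (⌊r + 1/2⌋₊ : ℝ) + 1 := Nat.lt_floor_add_one _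
      refine ⟨⌊r + 1/2⌋₊, ?_, ?_⟩
      · rw [Finset.mem_range, Nat.lt_succ_iff]
        have : ((⌊r + 1/2⌋₊ : ℕ) : ℝ) < (t:ℝ) + 1 := by linarith
        exact_mod_cast Nat.lt_succ_iff.mp (by exact_mod_cast this)
      · rw [hy]
        have heq : w - (-4 * gamma + 8 * gamma * (⌊r + 1/2⌋₊ : ℝ) / t)
            = (8 * gamma / t) * (r - ⌊r + 1/2⌋₊) := by
          rw [hrdef]
          field_simp
          ring
        rw [heq, abs_mul, abs_of_nonneg (by positivity : (0:ℝ) ≤ 8 * gamma / t)]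
        have habs2 : |r - (⌊r + 1/2⌋₊ : ℝ)| ≤ 1/2 := abs_le.mpr ⟨by linarith, by linarith⟩
        calc 8 * gamma / t * |r - (⌊r + 1/2⌋₊ : ℝ)| ≤ 8 * gamma / t * (1/2) := by
              apply mul_le_mul_of_nonneg_left habs2 (by positivity)
          _ = 4 * gamma / t := by ring
  -- grid spacing bound
  have hspace : 4 * gamma / t ≤ eps * A / 4 := by
    rw [div_le_iff₀ htpos]
    have h := mul_nonneg hA0 (by linarith : (0:ℝ) ≤ eps * (t:ℝ) - 32)
    nlinarith [h, hγhi, hA0]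
  -- abstract the grid minimum
  obtain ⟨m, hm⟩ : ∃ m : ℝ, m = ((Finset.range (t + 1)).inf' (by simp) fun ℓ =>
      (∑ i, lam i * |a i - y ℓ| ^ p) ^ (1 / p)) := ⟨_, rfl⟩
  have hMle : ∀ ℓ ∈ Finset.range (t + 1), m ≤ cost (y ℓ) := by
    intro ℓ hℓ
    rw [hm, hcostdef]
    exact Finset.inf'_le (fun ℓ => (∑ i, lam i * |a i - y ℓ| ^ p) ^ (1 / p)) hℓ
  rw [← hm]
  -- main per-z bound
  have hmain : ∀ z : ℝ, m ≤ (1 + eps / 2) * cost z := by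
    intro z
    rcases le_or_gt |z| (4 * gamma) with hz | hz
    · obtain ⟨ℓ, hℓ, hnear⟩ := hstep z hz
      have h1 : m ≤ cost (y ℓ) := hMle ℓ hℓ
      have h2 : cost (y ℓ) ≤ cost z + |z - y ℓ| := hlip (y ℓ) z
      have h5 : eps * A / 4 ≤ eps / 2 * cost z := by
        have := mul_le_mul_of_nonneg_left (hA2 z) heps.le
        linarith
      linarith [h1, h2, hnear, hspace, h5]
    · obtain ⟨ℓ, hℓ, hnear⟩ := hstep 0 (by rw [abs_zero]; linarith)
      have h1 : m ≤ cost (y ℓ) := hMle ℓ hℓ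
      have h2 : cost (y ℓ) ≤ cost 0 + |0 - y ℓ| := hlip (y ℓ) 0
      rw [hcost0] at h2
      have h3 : |z| ≤ cost z := hzle z
      have h5 : eps * A / 4 ≤ A / 8 := by linarith [hepsA]
      have h6 : 0 ≤ eps * cost z := mul_nonneg heps.le (hcost_nonneg z)
      linarith [h1, h2, hnear, hspace, h5, h6, h3, hγlo, hA0]
  -- assemble
  have hc : (0:ℝ) < 1 + eps / 2 := by linarith
  have hdiv : m / (1 + eps / 2) ≤ ⨅ z : ℝ, cost z := by
    refine le_ciInf fun z => ?_
    rw [div_le_iff₀ hc]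
    rw [mul_comm]
    exact hmain z
  rw [div_le_iff₀ hc] at hdiv
  linarith [hdiv]
end

section
/- Let p ∈ [1,2], let ε ∈ (0,1), let d, B ≥ 1 be integers with B ≥ 10/ε^p, let v ∈ ℝ^d, and fix j ∈ {1,…,d}. If h is drawn uniformly at random from the set of all functions {1,…,d} → {1,…,B}, then with probability at least 9/10, (Σ_{j'≠j} 1{h(j')=h(j)} · |v_{j'}|^p)^{1/p} ≤ ε · (Σ_{j'=1}^d |v_{j'}|^p)^{1/p}. -/
open Finset Real

lemma coll_card (d B : ℕ) (j j' : Fin d) (hne : j' ≠ j) :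
    ((Finset.univ.filter fun h : Fin d → Fin B => h j' = h j).card) = B ^ (d - 1) := by
  classical
  have := Finset.card_bij' (s := Finset.univ.filter fun h : Fin d → Fin B => h j' = h j)
    (t := (Finset.univ : Finset ({i : Fin d // i ≠ j'} → Fin B)))
    (fun h _ => fun i => h i.1)
    (fun g _ => fun i => if hi : i = j' then g ⟨j, Ne.symm hne⟩ else g ⟨i, hi⟩)
    (fun h hh => Finset.mem_univ _)
    (fun g hg => by
      simp only [Finset.mem_filter, Finset.mem_univ, true_and]
      rw [dif_pos trivial, dif_neg (Ne.symm hne)])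
    (fun h hh => by
      funext i
      by_cases hi : i = j'
      · subst hi
        simp only [dif_pos rfl]
        exact ((Finset.mem_filter.mp hh).2).symm
      · simp [hi])
    (fun g hg => by
      funext i
      rcases i with ⟨i, hi⟩
      simp [hi])
  rw [this]
  simp [Fintype.card_fun]

/-- For a uniformly random hash function `h : {1,…,d} → {1,…,B}` with `B ≥ 10/ε^p`, with
probability at least `9/10` the colliding mass `(Σ_{j'≠j} 1{h(j')=h(j)} |v_{j'}|^p)^{1/p}` is
at most `ε ‖v‖_p`. -/
theorem stmt_10 (p : ℝ) (hp : 1 ≤ p) (hp2 : p ≤ 2) (eps : ℝ) (heps : 0 < eps) (heps1 : eps < 1)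
    (d B : ℕ) (hd : 1 ≤ d) (hB : 1 ≤ B) (hB2 : 10 / eps ^ p ≤ (B : ℝ))
    (v : Fin d → ℝ) (j : Fin d) :
    (9 : ℝ) / 10 * (Fintype.card (Fin d → Fin B) : ℝ) ≤
      ((Finset.univ.filter fun h : Fin d → Fin B =>
          (∑ j' ∈ Finset.univ.erase j, if h j' = h j then |v j'| ^ p else 0) ^ (1 / p)
            ≤ eps * (∑ j' : Fin d, |v j'| ^ p) ^ (1 / p)).card : ℝ) := by
  classical
  have hp0 : (0:ℝ) < p := lt_of_lt_of_le one_pos hp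
  set X : (Fin d → Fin B) → ℝ :=
    fun h => ∑ j' ∈ Finset.univ.erase j, if h j' = h j then |v j'| ^ p else 0 with hXdef
  set T : ℝ := ∑ j' : Fin d, |v j'| ^ p with hTdef
  have hterm : ∀ i : Fin d, 0 ≤ |v i| ^ p := fun i => Real.rpow_nonneg (abs_nonneg _) p
  have hT0 : 0 ≤ T := Finset.sum_nonneg fun i _ => hterm i
  have hX0 : ∀ h, 0 ≤ X h := fun h => Finset.sum_nonneg fun i _ => by
    split_ifs
    exacts [hterm i, le_rfl]
  have hcardfun : (Fintype.card (Fin d → Fin B) : ℝ) = (B:ℝ) ^ d := by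
    rw [Fintype.card_fun]; push_cast; simp
  have hepsp : (0:ℝ) < eps ^ p := Real.rpow_pos_of_pos heps p
  -- the good set
  set good := Finset.univ.filter fun h : Fin d → Fin B =>
      X h ^ (1 / p) ≤ eps * T ^ (1 / p) with hgood
  -- key implication
  have himp : ∀ h : Fin d → Fin B, X h ≤ eps ^ p * T → X h ^ (1/p) ≤ eps * T ^ (1/p) := by
    intro h hle
    have h1 : X h ^ (1/p) ≤ (eps ^ p * T) ^ (1/p) :=
      Real.rpow_le_rpow (hX0 h) hle (by positivity)
    have h2 : (eps ^ p * T) ^ (1/p) = eps * T ^ (1/p) := by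
      rw [Real.mul_rpow (le_of_lt hepsp) hT0, ← Real.rpow_mul heps.le,
        mul_one_div_cancel (ne_of_gt hp0), Real.rpow_one]
    rw [h2] at h1
    exact h1
  -- expected collision mass
  have hsum : ∑ h : Fin d → Fin B, X h ≤ T * (B:ℝ) ^ (d - 1) := by
    have e1 : ∑ h : Fin d → Fin B, X h
        = ∑ j' ∈ Finset.univ.erase j, |v j'| ^ p *
            (((Finset.univ.filter fun h : Fin d → Fin B => h j' = h j).card : ℝ)) := by
      rw [hXdef, Finset.sum_comm]
      refine Finset.sum_congr rfl fun j' hj' => ?_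
      rw [← Finset.sum_filter, Finset.sum_const, nsmul_eq_mul, mul_comm]
    rw [e1]
    have e2 : ∀ j' ∈ Finset.univ.erase j, |v j'| ^ p *
        (((Finset.univ.filter fun h : Fin d → Fin B => h j' = h j).card : ℝ))
        = |v j'| ^ p * (B:ℝ) ^ (d-1) := by
      intro j' hj'
      rw [coll_card d B j j' (Finset.ne_of_mem_erase hj')]
      push_cast
      ring
    rw [Finset.sum_congr rfl e2, ← Finset.sum_mul]
    refine mul_le_mul_of_nonneg_right ?_ (by positivity)
    exact Finset.sum_le_sum_of_subset_of_nonneg (Finset.subset_univ _) (fun i _ _ => hterm i)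
  set bad := Finset.univ.filter (fun h : Fin d → Fin B => eps ^ p * T < X h) with hbad
  have hmark : (bad.card : ℝ) * (eps ^ p * T) ≤ T * (B:ℝ) ^ (d-1) := by
    calc (bad.card : ℝ) * (eps ^ p * T) = ∑ _h ∈ bad, eps ^ p * T := by
          rw [Finset.sum_const, nsmul_eq_mul]
      _ ≤ ∑ h ∈ bad, X h := Finset.sum_le_sum fun h hh => le_of_lt (Finset.mem_filter.mp hh).2
      _ ≤ ∑ h : Fin d → Fin B, X h :=
          Finset.sum_le_sum_of_subset_of_nonneg (Finset.subset_univ _) (fun h _ _ => hX0 h)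
      _ ≤ T * (B:ℝ)^(d-1) := hsum
  rcases eq_or_lt_of_le hT0 with hT | hT
  · -- T = 0 : everything collides with zero mass
    have hzero : ∀ i : Fin d, |v i| ^ p = 0 := fun i =>
      (Finset.sum_eq_zero_iff_of_nonneg (fun i _ => hterm i)).mp hT.symm i (Finset.mem_univ i)
    have hgoal : good = Finset.univ := by
      rw [hgood]
      refine Finset.eq_univ_iff_forall.mpr fun h => Finset.mem_filter.mpr ⟨Finset.mem_univ _, ?_⟩
      have hXz : X h = 0 :=
        Finset.sum_eq_zero fun i hi => by split_ifs; exacts [hzero i, rfl]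
      rw [hXz, ← hT, Real.zero_rpow (by positivity : (1:ℝ)/p ≠ 0), mul_zero]
    rw [hgoal, Finset.card_univ]
    have : (0:ℝ) ≤ (Fintype.card (Fin d → Fin B) : ℝ) := Nat.cast_nonneg _
    linarith
  · -- T > 0 : Markov
    have hbadle : (bad.card : ℝ) ≤ (B:ℝ)^d / 10 := by
      have h1 : (bad.card : ℝ) ≤ T * (B:ℝ)^(d-1) / (eps^p * T) :=
        (le_div_iff₀ (by positivity)).mpr hmark
      have h2 : T * (B:ℝ)^(d-1) / (eps^p * T) = (B:ℝ)^(d-1) / eps^p := by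
        field_simp
      have h3 : (B:ℝ)^(d-1) / eps^p ≤ (B:ℝ)^d / 10 := by
        rw [div_le_div_iff₀ hepsp (by norm_num)]
        have hBd : (B:ℝ)^d = (B:ℝ)^(d-1) * (B:ℝ) := by
          rw [← pow_succ]
          congr 1
          omega
        rw [hBd]
        have h10 : (10:ℝ) ≤ (B:ℝ) * eps^p := by
          rw [div_le_iff₀ hepsp] at hB2
          linarith
        have hBpos : (0:ℝ) ≤ (B:ℝ)^(d-1) := by positivity
        nlinarith
      rw [h2] at h1
      linarith
    have hsplit : bad.card + (Finset.univ.filter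
        (fun h : Fin d → Fin B => ¬ (eps ^ p * T < X h))).card
        = Fintype.card (Fin d → Fin B) := by
      rw [hbad, Finset.card_filter_add_card_filter_not, Finset.card_univ]
    have hsub : (Finset.univ.filter (fun h : Fin d → Fin B => ¬ (eps ^ p * T < X h))) ⊆ good := by
      intro h hh
      rw [hgood]
      refine Finset.mem_filter.mpr ⟨Finset.mem_univ _, ?_⟩
      exact himp h (not_lt.mp (Finset.mem_filter.mp hh).2)
    have hcardle : ((Finset.univ.filter
        (fun h : Fin d → Fin B => ¬ (eps ^ p * T < X h))).card : ℝ)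
        ≤ (good.card : ℝ) := Nat.cast_le.mpr (Finset.card_le_card hsub)
    have hc1 : ((Fintype.card (Fin d → Fin B)):ℝ) = (bad.card : ℝ) +
        ((Finset.univ.filter (fun h : Fin d → Fin B => ¬ (eps ^ p * T < X h))).card : ℝ) := by
      rw [← hsplit]
      push_cast
      ring
    linarith [hcardfun]
end

section
/- Let p ∈ [1,2], let n, d ≥ 1, let λ_1,…,λ_n be weights, and let x_1,…,x_n ∈ ℝ^d satisfy Σ_{i=1}^n λ_i x_i = 0 (the zero vector in ℝ^d). Then 2^{−p} · Σ_{i=1}^n λ_i Σ_{j=1}^d |x_{ij}|^p ≤ inf_{c∈ℝ^d} Σ_{i=1}^n λ_i Σ_{j=1}^d |x_{ij} − c_j|^p ≤ Σ_{i=1}^n λ_i Σ_{j=1}^d |x_{ij}|^p. -/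
open Finset Real

lemma key_rpow (p : ℝ) (hp : 1 ≤ p) (a b : ℝ) (ha : 0 ≤ a) (hb : 0 ≤ b) :
    (a + b) ^ p ≤ 2 ^ (p - 1) * (a ^ p + b ^ p) := by
  have h := NNReal.rpow_add_le_mul_rpow_add_rpow ⟨a, ha⟩ ⟨b, hb⟩ hp
  have := NNReal.coe_le_coe.2 h
  push_cast at this
  exact this

/-- For centered weighted points in `ℝ^d` and `p ∈ [1,2]`, the optimal `ℓ_p^p`-median cost is
within the factors `[2^{-p}, 1]` of the cost of using the origin as center. -/
theorem stmt_13 (n d : ℕ) (hn : 1 ≤ n) (hd : 1 ≤ d) (p : ℝ) (hp : 1 ≤ p) (hp2 : p ≤ 2)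
    (lam : Fin n → ℝ) (hlam : ∀ i, 0 ≤ lam i) (hsum : ∑ i, lam i = 1)
    (x : Fin n → Fin d → ℝ) (hcenter : ∑ i, lam i • x i = (0 : Fin d → ℝ)) :
    (2 : ℝ) ^ (-p) * ∑ i, lam i * ∑ j, |x i j| ^ p
        ≤ ⨅ c : Fin d → ℝ, ∑ i, lam i * ∑ j, |x i j - c j| ^ p ∧
    (⨅ c : Fin d → ℝ, ∑ i, lam i * ∑ j, |x i j - c j| ^ p)
        ≤ ∑ i, lam i * ∑ j, |x i j| ^ p := by
  have hnn : ∀ c : Fin d → ℝ, 0 ≤ ∑ i, lam i * ∑ j, |x i j - c j| ^ p := by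
    intro c
    refine Finset.sum_nonneg fun i _ => mul_nonneg (hlam i) ?_
    exact Finset.sum_nonneg fun j _ => Real.rpow_nonneg (abs_nonneg _) _
  have hbdd : BddBelow (Set.range fun c : Fin d → ℝ =>
      ∑ i, lam i * ∑ j, |x i j - c j| ^ p) :=
    ⟨0, by rintro y ⟨c, rfl⟩; exact hnn c⟩
  constructor
  · -- lower bound
    refine le_ciInf fun c => ?_
    have h2p : (0:ℝ) < (2:ℝ) ^ p := Real.rpow_pos_of_pos two_pos p
    rw [Real.rpow_neg (by norm_num), inv_mul_le_iff₀ h2p]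
    -- per-coordinate argument
    have hkey : ∀ j, ∑ i, lam i * |x i j| ^ p
        ≤ 2 ^ p * ∑ i, lam i * |x i j - c j| ^ p := by
      intro j
      set A := ∑ i, lam i * |x i j - c j| ^ p with hA
      have hAnn : 0 ≤ A :=
        Finset.sum_nonneg fun i _ => mul_nonneg (hlam i)
          (Real.rpow_nonneg (abs_nonneg _) _)
      have hcj : |c j| ^ p ≤ A := by
        have hxc : ∑ i, lam i * x i j = 0 := by
          have := congrFun hcenter j
          simpa [Finset.sum_apply] using this
        have h1 : |c j| ≤ ∑ i, lam i * |x i j - c j| := by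
          have : c j = ∑ i, lam i * (c j - x i j) := by
            simp [mul_sub, Finset.sum_sub_distrib, ← Finset.sum_mul, hsum, hxc]
          calc |c j| = |∑ i, lam i * (c j - x i j)| := by rw [← this]
            _ ≤ ∑ i, |lam i * (c j - x i j)| := Finset.abs_sum_le_sum_abs _ _
            _ = ∑ i, lam i * |x i j - c j| := by
                refine Finset.sum_congr rfl fun i _ => ?_
                rw [abs_mul, abs_of_nonneg (hlam i), abs_sub_comm]
        calc |c j| ^ p ≤ (∑ i, lam i * |x i j - c j|) ^ p :=
              Real.rpow_le_rpow (abs_nonneg _) h1 (by linarith)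
          _ ≤ A := Real.rpow_arith_mean_le_arith_mean_rpow _ _ _
              (fun i _ => hlam i) hsum (fun i _ => abs_nonneg _) hp
      have hterm : ∀ i, |x i j| ^ p
          ≤ 2 ^ (p - 1) * (|x i j - c j| ^ p + |c j| ^ p) := by
        intro i
        have h1 : |x i j| ≤ |x i j - c j| + |c j| := by
          calc |x i j| = |(x i j - c j) + c j| := by ring_nf
            _ ≤ |x i j - c j| + |c j| := abs_add_le _ _
        calc |x i j| ^ p ≤ (|x i j - c j| + |c j|) ^ p :=
              Real.rpow_le_rpow (abs_nonneg _) h1 (by linarith)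
          _ ≤ 2 ^ (p - 1) * (|x i j - c j| ^ p + |c j| ^ p) :=
              key_rpow p hp _ _ (abs_nonneg _) (abs_nonneg _)
      have hsum1 : ∑ i, lam i * |x i j| ^ p
          ≤ 2 ^ (p - 1) * (A + |c j| ^ p) := by
        calc ∑ i, lam i * |x i j| ^ p
            ≤ ∑ i, lam i * (2 ^ (p - 1) * (|x i j - c j| ^ p + |c j| ^ p)) :=
              Finset.sum_le_sum fun i _ =>
                mul_le_mul_of_nonneg_left (hterm i) (hlam i)
          _ = 2 ^ (p - 1) * (A + |c j| ^ p) := by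
              simp only [mul_add, mul_left_comm, Finset.sum_add_distrib,
                ← Finset.mul_sum, ← Finset.sum_mul, hsum, hA, one_mul]
              congr 1
              rw [Finset.mul_sum]
              exact Finset.sum_congr rfl fun i _ => by ring
      have h2 : (2:ℝ) ^ (p - 1) * (A + |c j| ^ p) ≤ 2 ^ p * A := by
        have h2p1 : (0:ℝ) ≤ (2:ℝ) ^ (p - 1) := le_of_lt (Real.rpow_pos_of_pos two_pos _)
        have : (2:ℝ) ^ p = 2 ^ (p - 1) * 2 := by
          rw [← Real.rpow_add_one (by norm_num : (2:ℝ) ≠ 0) (p-1)]; ring_nf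
        rw [this]
        nlinarith [hcj, hAnn]
      exact hsum1.trans h2
    calc ∑ i, lam i * ∑ j, |x i j| ^ p
        = ∑ j, ∑ i, lam i * |x i j| ^ p := by
          rw [Finset.sum_comm]
          exact Finset.sum_congr rfl fun i _ => Finset.mul_sum _ _ _
      _ ≤ ∑ j, 2 ^ p * ∑ i, lam i * |x i j - c j| ^ p :=
          Finset.sum_le_sum fun j _ => hkey j
      _ = (∑ i, lam i * ∑ j, |x i j - c j| ^ p) * 2 ^ p := by
          rw [← Finset.mul_sum, Finset.sum_comm, mul_comm]
          congr 1
          exact Finset.sum_congr rfl fun i _ => (Finset.mul_sum _ _ _).symm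
      _ = 2 ^ p * ∑ i, lam i * ∑ j, |x i j - c j| ^ p := mul_comm _ _
  · -- upper bound
    have := ciInf_le hbdd (0 : Fin d → ℝ)
    simpa using this
end
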